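/- Let U ⊆ ℂ be a nonempty open set, let α, β : U → (0,∞) be measurable weights, and suppose φ : U → ℂ is a nowhere-zero holomorphic function with β(z) = α(z)/|φ(z)|² for all z ∈ U. For a weight γ and z ∈ U, let K_γ(z) denote the supremum of |f(z)|² over all f ∈ HL²(U, γ) with ∫_U |f|² γ ≤ 1 (the diagonal of the reproducing kernel, i.e., the optimal pointwise-bound constant at z). Then α(z) · K_α(z) = β(z) · K_β(z) for every z ∈ U. -/

import Mathlib

open MeasureTheory Metric Complex
open scoped ENNReal

/-- The diagonal of the reproducing kernel of `HL²(U, γ)`: the optimal pointwise-bound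
constant at `z`, i.e. the supremum of `|f z|²` over holomorphic `f` on `U` with
`∫_U |f|² γ ≤ 1`. -/
noncomputable def kernelDiag (U : Set ℂ) (γ : ℂ → ℝ) (z : ℂ) : ℝ≥0∞ :=
  sSup { x : ℝ≥0∞ | ∃ f : ℂ → ℂ, DifferentiableOn ℂ f U ∧
      MeasureTheory.IntegrableOn (fun ω => ‖f ω‖ ^ 2 * γ ω) U ∧
      (∫ ω in U, ‖f ω‖ ^ 2 * γ ω) ≤ 1 ∧
      x = ENNReal.ofReal (‖f z‖ ^ 2) }

lemma kernelDiag_aux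
    (U : Set ℂ) (hU : IsOpen U)
    (α β : ℂ → ℝ)
    (hαpos : ∀ z ∈ U, 0 < α z) (hβpos : ∀ z ∈ U, 0 < β z)
    (φ : ℂ → ℂ) (hφ : DifferentiableOn ℂ φ U) (hφ0 : ∀ z ∈ U, φ z ≠ 0)
    (hβα : ∀ z ∈ U, β z = α z / ‖φ z‖ ^ 2) :
    ∀ z ∈ U, ENNReal.ofReal (α z) * kernelDiag U α z ≤
      ENNReal.ofReal (β z) * kernelDiag U β z := by
  intro z hz
  unfold kernelDiag
  rw [ENNReal.mul_sSup]
  apply iSup₂_le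
  rintro x ⟨f, hf, hfi, hfle, rfl⟩
  set g : ℂ → ℂ := fun ω => f ω * φ ω with hg
  have key : ∀ ω ∈ U, ‖g ω‖ ^ 2 * β ω = ‖f ω‖ ^ 2 * α ω := by
    intro ω hω
    have hne : ‖φ ω‖ ≠ 0 := by
      simpa using (norm_ne_zero_iff.mpr (hφ0 ω hω))
    rw [hβα ω hω, hg]
    simp only [norm_mul]
    field_simp
  have hgi : MeasureTheory.IntegrableOn (fun ω => ‖g ω‖ ^ 2 * β ω) U := by
    exact (MeasureTheory.IntegrableOn.congr_fun hfi
      (fun ω hω => (key ω hω).symm) hU.measurableSet)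
  have hgint : (∫ ω in U, ‖g ω‖ ^ 2 * β ω) ≤ 1 := by
    rw [MeasureTheory.setIntegral_congr_fun hU.measurableSet key]
    exact hfle
  have hmem : ENNReal.ofReal (‖g z‖ ^ 2) ∈
      { x : ℝ≥0∞ | ∃ f : ℂ → ℂ, DifferentiableOn ℂ f U ∧
        MeasureTheory.IntegrableOn (fun ω => ‖f ω‖ ^ 2 * β ω) U ∧
        (∫ ω in U, ‖f ω‖ ^ 2 * β ω) ≤ 1 ∧
        x = ENNReal.ofReal (‖f z‖ ^ 2) } := by
    exact ⟨g, hf.mul hφ, hgi, hgint, rfl⟩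
  calc ENNReal.ofReal (α z) * ENNReal.ofReal (‖f z‖ ^ 2)
      = ENNReal.ofReal (β z) * ENNReal.ofReal (‖g z‖ ^ 2) := by
        rw [← ENNReal.ofReal_mul (hαpos z hz).le,
          ← ENNReal.ofReal_mul (hβpos z hz).le]
        rw [show α z * ‖f z‖ ^ 2 = ‖f z‖ ^ 2 * α z from mul_comm _ _,
          show β z * ‖g z‖ ^ 2 = ‖g z‖ ^ 2 * β z from mul_comm _ _,
          key z hz]
    _ ≤ ENNReal.ofReal (β z) * sSup _ :=
        mul_le_mul_right (le_sSup hmem) _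

/-- For holomorphically equivalent spaces, `α(z)·K_α(z,z) = β(z)·K_β(z,z)`. -/
theorem weight_mul_kernelDiag_invariant
    (U : Set ℂ) (hU : IsOpen U) (hne : U.Nonempty)
    (α β : ℂ → ℝ) (hαm : Measurable α) (hβm : Measurable β)
    (hαpos : ∀ z ∈ U, 0 < α z) (hβpos : ∀ z ∈ U, 0 < β z)
    (φ : ℂ → ℂ) (hφ : DifferentiableOn ℂ φ U) (hφ0 : ∀ z ∈ U, φ z ≠ 0)
    (hβα : ∀ z ∈ U, β z = α z / ‖φ z‖ ^ 2) :
    ∀ z ∈ U, ENNReal.ofReal (α z) * kernelDiag U α z =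
      ENNReal.ofReal (β z) * kernelDiag U β z := by
  intro z hz
  have hψ : DifferentiableOn ℂ (fun ω => (φ ω)⁻¹) U := hφ.inv hφ0
  have hψ0 : ∀ w ∈ U, (φ w)⁻¹ ≠ 0 := fun w hw => inv_ne_zero (hφ0 w hw)
  have hαβ : ∀ w ∈ U, α w = β w / ‖(φ w)⁻¹‖ ^ 2 := by
    intro w hw
    have hne : ‖φ w‖ ≠ 0 := by
      simpa using (norm_ne_zero_iff.mpr (hφ0 w hw))
    rw [hβα w hw, norm_inv]
    field_simp
  exact le_antisymm
    (kernelDiag_aux U hU α β hαpos hβpos φ hφ hφ0 hβα z hz)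
    (kernelDiag_aux U hU β α hβpos hαpos _ hψ hψ0 hαβ z hz)
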